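/- Let k ≥ 1 with k ≡ 1 or 2 (mod 3), set n = 3k and ω = exp(2πi/n), let N ≥ 2, and let η_1, …, η_{2N} be elements of an associative unital ℂ-algebra, indexed cyclically mod 2N, satisfying η_j η_{j+1} = ω η_{j+1} η_j for all j, η_j η_k = η_k η_j whenever k ≢ j±1 (mod 2N), and η_j^n = 1 for all j. Define A₀ = Σ_{j=1}^{N} (η_{2j−1}^k − η_{2j−1}^{n−k}) and A₁ = Σ_{j=1}^{N} (η_{2j}^k − η_{2j}^{n−k}). Then A₀ and A₁ satisfy the Dolan–Grady condition with constant C = −27, i.e. [A₀,[A₀,[A₀,A₁]]] = −27·[A₀,A₁] and [A₁,[A₁,[A₁,A₀]]] = −27·[A₁,A₀]. -/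

import Mathlib

section Helpers

variable {A : Type*} [Ring A] [Algebra ℂ A]

private lemma swap_pow (s : ℂ) (x y : A) (h : x * y = s • (y * x)) (a b : ℕ) :
    x ^ a * y ^ b = s ^ (a * b) • (y ^ b * x ^ a) := by
  have hb : ∀ c : ℕ, x * y ^ c = s ^ c • (y ^ c * x) := by
    intro c
    induction c with
    | zero => simp
    | succ c ih =>
      calc x * y ^ (c+1) = (x * y ^ c) * y := by rw [pow_succ, mul_assoc]
      _ = s ^ c • (y ^ c * (x * y)) := by rw [ih, smul_mul_assoc, mul_assoc]
      _ = s ^ c • (y ^ c * (s • (y * x))) := by rw [h]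
      _ = s ^ (c+1) • (y ^ (c+1) * x) := by
          rw [mul_smul_comm, smul_smul, pow_succ, pow_succ, mul_assoc]
  induction a with
  | zero => simp
  | succ a ih =>
    calc x ^ (a+1) * y ^ b = x ^ a * (x * y ^ b) := by rw [pow_succ, mul_assoc]
    _ = x ^ a * (s ^ b • (y ^ b * x)) := by rw [hb]
    _ = s ^ b • ((x ^ a * y ^ b) * x) := by rw [mul_smul_comm, mul_assoc]
    _ = s ^ b • ((s ^ (a*b) • (y ^ b * x ^ a)) * x) := by rw [ih]
    _ = (s ^ b * s ^ (a*b)) • (y ^ b * x ^ (a+1)) := by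
          rw [smul_mul_assoc, smul_smul, mul_assoc, ← pow_succ]
    _ = s ^ ((a+1) * b) • (y ^ b * x ^ (a+1)) := by
          rw [← pow_add]; congr 1; ring

set_option maxHeartbeats 4000000 in
private lemma local_dg (q : ℂ) (hq : q^2 + q + 1 = 0)
    (u v w : A) (hu : u^3 = 1) (hv : v^3 = 1) (hw : w^3 = 1)
    (huv : u * v = q • (v * u)) (hvw : v * w = q • (w * v)) (huw : u * w = w * u) :
    ⁅(u - u^2) + (w - w^2), ⁅(u - u^2) + (w - w^2), ⁅(u - u^2) + (w - w^2), v - v^2⁆⁆⁆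
      = (-27 : ℂ) • ⁅(u - u^2) + (w - w^2), v - v^2⁆ := by
  have hq3 : q^3 = 1 := by linear_combination (q - 1) * hq
  have hq2 : q^2 = -q - 1 := by linear_combination hq
  have cube : ∀ x : A, x^3 = 1 → (∀ t : A, x * (x * (x * t)) = t) ∧ x * (x * x) = 1 := by
    intro x hx
    refine ⟨fun t => ?_, ?_⟩
    · have : x * (x * (x * t)) = x^3 * t := by noncomm_ring
      rw [this, hx, one_mul]
    · have : x * (x * x) = x^3 := by noncomm_ring
      rw [this, hx]
  have huv' : ∀ t : A, u * (v * t) = q • (v * (u * t)) := by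
    intro t; rw [← mul_assoc, huv, smul_mul_assoc, mul_assoc]
  have hvw' : ∀ t : A, v * (w * t) = q • (w * (v * t)) := by
    intro t; rw [← mul_assoc, hvw, smul_mul_assoc, mul_assoc]
  have huw' : ∀ t : A, u * (w * t) = w * (u * t) := by
    intro t; rw [← mul_assoc, huw, mul_assoc]
  obtain ⟨hu3, hu3'⟩ := cube u hu
  obtain ⟨hv3, hv3'⟩ := cube v hv
  obtain ⟨hw3, hw3'⟩ := cube w hw
  have hqr3 : q^3 = q^0 := by rw [hq3, pow_zero]
  have hqr4 : q^4 = q^1 := by rw [show (4:ℕ) = 1+3 from rfl, pow_add, hq3, mul_one]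
  have hqr5 : q^5 = q^2 := by rw [show (5:ℕ) = 2+3 from rfl, pow_add, hq3, mul_one]
  have hqr6 : q^6 = q^3 := by rw [show (6:ℕ) = 3+3 from rfl, pow_add, hq3, mul_one]
  have hqr7 : q^7 = q^4 := by rw [show (7:ℕ) = 4+3 from rfl, pow_add, hq3, mul_one]
  have hqr8 : q^8 = q^5 := by rw [show (8:ℕ) = 5+3 from rfl, pow_add, hq3, mul_one]
  have hqr9 : q^9 = q^6 := by rw [show (9:ℕ) = 6+3 from rfl, pow_add, hq3, mul_one]
  have hqr10 : q^10 = q^7 := by rw [show (10:ℕ) = 7+3 from rfl, pow_add, hq3, mul_one]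
  have hqr11 : q^11 = q^8 := by rw [show (11:ℕ) = 8+3 from rfl, pow_add, hq3, mul_one]
  have hqr12 : q^12 = q^9 := by rw [show (12:ℕ) = 9+3 from rfl, pow_add, hq3, mul_one]
  have hqr13 : q^13 = q^10 := by rw [show (13:ℕ) = 10+3 from rfl, pow_add, hq3, mul_one]
  have hqr14 : q^14 = q^11 := by rw [show (14:ℕ) = 11+3 from rfl, pow_add, hq3, mul_one]
  have hqr15 : q^15 = q^12 := by rw [show (15:ℕ) = 12+3 from rfl, pow_add, hq3, mul_one]
  simp only [Ring.lie_def, pow_two, sub_mul, mul_sub, add_mul, mul_add, smul_sub, smul_add,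
    smul_mul_assoc, mul_smul_comm, smul_smul, mul_assoc,
    huv, hvw, huw, huv', hvw', huw', hu3, hu3', hv3, hv3', hw3, hw3', mul_one, one_mul]
  match_scalars
  all_goals (try ring_nf)
  all_goals (try simp only [hqr15, hqr14, hqr13, hqr12, hqr11, hqr10, hqr9, hqr8, hqr7,
    hqr6, hqr5, hqr4, hqr3, pow_zero, pow_one])
  all_goals (try ring_nf)
  all_goals (try simp only [hq2])
  all_goals (try ring_nf)

private lemma lie_sum' {ι : Type*} (s : Finset ι) (x : A) (f : ι → A) :
    ⁅x, ∑ i ∈ s, f i⁆ = ∑ i ∈ s, ⁅x, f i⁆ := by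
  simp only [Ring.lie_def, Finset.mul_sum, Finset.sum_mul, ← Finset.sum_sub_distrib]

private lemma lie_zero_of_commute {T X : A} (h : Commute T X) : ⁅T, X⁆ = 0 := by
  rw [Ring.lie_def, h.eq, sub_self]

private lemma key_step (q : ℂ) (hq : q^2 + q + 1 = 0)
    (u v w T : A) (hu : u^3 = 1) (hv : v^3 = 1) (hw : w^3 = 1)
    (huv : u * v = q • (v * u)) (hvw : v * w = q • (w * v)) (huw : u * w = w * u)
    (h1 : Commute T (v - v^2)) (h2 : Commute T ((u - u^2) + (w - w^2))) :
    ⁅(u - u^2) + (w - w^2) + T, ⁅(u - u^2) + (w - w^2) + T,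
        ⁅(u - u^2) + (w - w^2) + T, v - v^2⁆⁆⁆
      = (-27 : ℂ) • ⁅(u - u^2) + (w - w^2) + T, v - v^2⁆ := by
  set S := (u - u^2) + (w - w^2) with hS
  set X := v - v^2 with hX
  have cbr : ∀ Y : A, Commute T Y → Commute T ⁅S, Y⁆ := fun Y h => by
    rw [Ring.lie_def]; exact (h2.mul_right h).sub_right (h.mul_right h2)
  have e1 : ⁅S + T, X⁆ = ⁅S, X⁆ := by
    rw [Ring.lie_def, Ring.lie_def, add_mul, mul_add, h1.eq]; abel
  have e2 : ⁅S + T, ⁅S + T, X⁆⁆ = ⁅S, ⁅S, X⁆⁆ := by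
    rw [e1, Ring.lie_def (S + T), Ring.lie_def S ⁅S, X⁆, add_mul, mul_add, (cbr X h1).eq]; abel
  have e3 : ⁅S + T, ⁅S + T, ⁅S + T, X⁆⁆⁆ = ⁅S, ⁅S, ⁅S, X⁆⁆⁆ := by
    rw [e2, Ring.lie_def (S + T), Ring.lie_def S ⁅S, ⁅S, X⁆⁆, add_mul, mul_add,
      (cbr _ (cbr X h1)).eq]; abel
  rw [e3, e1, hS, hX]
  exact local_dg q hq u v w hu hv hw huv hvw huw

end Helpers

theorem dolan_grady_clock_third
    (k n : ℕ) (hk1 : 1 ≤ k) (hkmod : k % 3 = 1 ∨ k % 3 = 2) (hn : n = 3 * k)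
    (N : ℕ) (hN : 2 ≤ N) (A : Type*) [Ring A] [Algebra ℂ A]
    (ω : ℂ) (hω : ω = Complex.exp (2 * Real.pi * Complex.I / n))
    (η : ZMod (2 * N) → A)
    (hanti : ∀ j : ZMod (2 * N), η j * η (j + 1) = ω • (η (j + 1) * η j))
    (hcomm : ∀ j l : ZMod (2 * N), l ≠ j + 1 → l ≠ j - 1 → η j * η l = η l * η j)
    (hpow : ∀ j : ZMod (2 * N), η j ^ n = 1)
    (A₀ A₁ : A)
    (hA₀ : A₀ = ∑ j ∈ Finset.range N,
      (η (2 * (j : ZMod (2 * N)) + 1) ^ k - η (2 * (j : ZMod (2 * N)) + 1) ^ (n - k)))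
    (hA₁ : A₁ = ∑ j ∈ Finset.range N,
      (η (2 * (j : ZMod (2 * N)) + 2) ^ k - η (2 * (j : ZMod (2 * N)) + 2) ^ (n - k))) :
    ⁅A₀, ⁅A₀, ⁅A₀, A₁⁆⁆⁆ = (-27 : ℂ) • ⁅A₀, A₁⁆ ∧
    ⁅A₁, ⁅A₁, ⁅A₁, A₀⁆⁆⁆ = (-27 : ℂ) • ⁅A₁, A₀⁆ := by
  subst hn
  haveI : NeZero (2 * N) := ⟨by omega⟩
  -- ### scalar facts
  have hnC : ((3 * k : ℕ) : ℂ) ≠ 0 := Nat.cast_ne_zero.mpr (by omega)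
  have hωn : ω ^ (3 * k) = 1 := by
    rw [hω, ← Complex.exp_nat_mul,
      show ((3 * k : ℕ) : ℂ) * (2 * Real.pi * Complex.I / ((3 * k : ℕ) : ℂ))
        = 2 * Real.pi * Complex.I by rw [← mul_div_assoc]; exact mul_div_cancel_left₀ _ hnC,
      Complex.exp_two_pi_mul_I]
  set q : ℂ := ω ^ (k * k) with hqdef
  have hq3 : q ^ 3 = 1 := by
    rw [hqdef, ← pow_mul, show k * k * 3 = 3 * k * k by ring, pow_mul, hωn, one_pow]
  have hqne1 : q ≠ 1 := by
    intro hq1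
    rw [hqdef, hω, ← Complex.exp_nat_mul] at hq1
    obtain ⟨m, hm⟩ := Complex.exp_eq_one_iff.mp hq1
    have h3 := congrArg (· * ((3 * k : ℕ) : ℂ)) hm
    rw [mul_assoc, div_mul_cancel₀ _ hnC] at h3
    have h4 : ((k * k : ℕ) : ℂ) * (2 * Real.pi * Complex.I)
        = ((m : ℂ) * ((3 * k : ℕ) : ℂ)) * (2 * Real.pi * Complex.I) := by
      linear_combination h3
    have h5 := mul_right_cancel₀ Complex.two_pi_I_ne_zero h4
    have h6 : ((k : ℤ) * k) = m * (3 * k) := by exact_mod_cast h5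
    have hkz : (k : ℤ) ≠ 0 := by exact_mod_cast (show k ≠ 0 by omega)
    have h7 : (k : ℤ) * k = (m * 3) * k := by linear_combination h6
    have h8 : (k : ℤ) = m * 3 := mul_right_cancel₀ hkz h7
    have h9 : (3 : ℤ) ∣ (k : ℤ) := ⟨m, by linarith⟩
    have h10 : 3 ∣ k := by exact_mod_cast h9
    omega
  have hq : q ^ 2 + q + 1 = 0 := by
    have hfac : (q - 1) * (q ^ 2 + q + 1) = 0 := by linear_combination hq3
    rcases mul_eq_zero.mp hfac with h | h
    · exact absurd (sub_eq_zero.mp h) hqne1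
    · exact h
  -- ### site arithmetic in ZMod (2*N)
  have h2N0 : ((2 * N : ℕ) : ZMod (2 * N)) = 0 := ZMod.natCast_self _
  have hNN : ((N : ℕ) : ZMod (2 * N)) * 2 = 0 := by
    have h : ((N : ℕ) : ZMod (2 * N)) * 2 = ((2 * N : ℕ) : ZMod (2 * N)) := by push_cast; ring
    rw [h, h2N0]
  have hpar : ∀ x y : ZMod (2 * N), 2 * x + 1 ≠ 2 * y := by
    intro x y h
    have h2 : (2 : ℕ) ∣ 2 * N := ⟨N, rfl⟩
    have h' := congrArg (ZMod.castHom h2 (ZMod 2)) h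
    simp only [map_add, map_mul, map_one, map_ofNat] at h'
    rw [show ((2 : ZMod 2)) = 0 from rfl] at h'
    simp only [zero_mul, zero_add] at h'
    exact one_ne_zero h'
  have hinj2 : ∀ a b : ℕ, a < N → b < N →
      (2 * (a : ZMod (2 * N)) = 2 * (b : ZMod (2 * N))) → a = b := by
    intro a b ha hb h
    have h' : ((2 * a : ℕ) : ZMod (2 * N)) = ((2 * b : ℕ) : ZMod (2 * N)) := by
      push_cast; linear_combination h
    have hv := congrArg ZMod.val h'
    rw [ZMod.val_natCast_of_lt (by omega), ZMod.val_natCast_of_lt (by omega)] at hv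
    omega
  have hmodcast : ∀ x : ℕ,
      2 * ((x % N : ℕ) : ZMod (2 * N)) = 2 * ((x : ℕ) : ZMod (2 * N)) := by
    intro x
    have hx : ((x : ℕ) : ZMod (2 * N))
        = ((N : ℕ) : ZMod (2 * N)) * ((x / N : ℕ) : ZMod (2 * N))
          + ((x % N : ℕ) : ZMod (2 * N)) := by
      rw [← Nat.cast_mul, ← Nat.cast_add, Nat.div_add_mod]
    rw [hx]
    linear_combination (-((x / N : ℕ) : ZMod (2 * N))) * hNN
  -- ### commutation basics
  have hcomm' : ∀ x l : ZMod (2 * N), l ≠ x + 1 → l ≠ x - 1 →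
      ∀ a b : ℕ, Commute (η x ^ a) (η l ^ b) := by
    intro x l h1 h2 a b
    exact Commute.pow_pow (hcomm x l h1 h2) a b
  have hcube : ∀ x : ZMod (2 * N), (η x ^ k) ^ 3 = 1 := by
    intro x; rw [← pow_mul, show k * 3 = 3 * k by ring, hpow]
  have hswapη : ∀ x : ZMod (2 * N),
      η x ^ k * η (x + 1) ^ k = q • (η (x + 1) ^ k * η x ^ k) := by
    intro x; exact swap_pow ω (η x) (η (x + 1)) (hanti x) k k
  -- odd sites pairwise commute; even sites pairwise commute
  have hodd : ∀ (xa xb : ZMod (2 * N)) (a b : ℕ),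
      Commute (η (2 * xa + 1) ^ a) (η (2 * xb + 1) ^ b) := by
    intro xa xb a b
    refine hcomm' _ _ (fun h => hpar xb (xa + 1) (by linear_combination h)) ?_ a b
    intro h
    exact hpar xb xa (by linear_combination h)
  have heven : ∀ (xa xb : ZMod (2 * N)) (a b : ℕ),
      Commute (η (2 * xa + 2) ^ a) (η (2 * xb + 2) ^ b) := by
    intro xa xb a b
    refine hcomm' _ _ (fun h => hpar (xa + 1) (xb + 1) (by linear_combination -h)) ?_ a b
    intro h
    exact hpar xa (xb + 1) (by linear_combination -h)
  -- ### the families P (odd sites) and R (even sites)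
  obtain ⟨P, hPspec⟩ : ∃ P : ℕ → A, ∀ i : ℕ,
      P i = η (2 * (i : ZMod (2 * N)) + 1) ^ k
            - η (2 * (i : ZMod (2 * N)) + 1) ^ (3 * k - k) :=
    ⟨_, fun i => rfl⟩
  obtain ⟨R, hRspec⟩ : ∃ R : ℕ → A, ∀ i : ℕ,
      R i = η (2 * (i : ZMod (2 * N)) + 2) ^ k
            - η (2 * (i : ZMod (2 * N)) + 2) ^ (3 * k - k) :=
    ⟨_, fun i => rfl⟩
  have hA₀' : A₀ = ∑ i ∈ Finset.range N, P i := by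
    rw [hA₀]; exact Finset.sum_congr rfl fun i _ => (hPspec i).symm
  have hA₁' : A₁ = ∑ i ∈ Finset.range N, R i := by
    rw [hA₁]; exact Finset.sum_congr rfl fun i _ => (hRspec i).symm
  have hPsq : ∀ i : ℕ, P i = η (2 * (i : ZMod (2 * N)) + 1) ^ k
      - (η (2 * (i : ZMod (2 * N)) + 1) ^ k) ^ 2 := by
    intro i; rw [hPspec i, ← pow_mul, show k * 2 = 3 * k - k by omega]
  have hRsq : ∀ i : ℕ, R i = η (2 * (i : ZMod (2 * N)) + 2) ^ k
      - (η (2 * (i : ZMod (2 * N)) + 2) ^ k) ^ 2 := by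
    intro i; rw [hRspec i, ← pow_mul, show k * 2 = 3 * k - k by omega]
  -- commutes of P i with P-sums and R-sums
  have hPP : ∀ i i' : ℕ, Commute (P i) (P i') := by
    intro i i'
    rw [hPspec i, hPspec i']
    exact (((hodd _ _ k k).sub_right (hodd _ _ k _)).sub_left
      (((hodd _ _ _ k).sub_right (hodd _ _ _ _))))
  have hRR : ∀ i i' : ℕ, Commute (R i) (R i') := by
    intro i i'
    rw [hRspec i, hRspec i']
    exact (((heven _ _ k k).sub_right (heven _ _ k _)).sub_left
      (((heven _ _ _ k).sub_right (heven _ _ _ _))))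
  -- ### key lemma for the first Dolan–Grady relation
  have key1 : ∀ j ∈ Finset.range N, ⁅A₀, ⁅A₀, ⁅A₀, R j⁆⁆⁆ = (-27 : ℂ) • ⁅A₀, R j⁆ := by
    intro j hjmem
    have hj : j < N := Finset.mem_range.mp hjmem
    set j' := (j + 1) % N with hj'def
    have hj'lt : j' < N := Nat.mod_lt _ (by omega)
    have hj'ne : j' ≠ j := by
      rcases Nat.lt_or_ge (j + 1) N with h1 | h1
      · rw [hj'def, Nat.mod_eq_of_lt h1]; omega
      · have he : j + 1 = N := by omega
        rw [hj'def, he, Nat.mod_self]; omega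
    have hcastj' : 2 * ((j' : ℕ) : ZMod (2 * N)) = 2 * ((j : ℕ) : ZMod (2 * N)) + 2 := by
      rw [hj'def, hmodcast (j + 1)]; push_cast; ring
    -- local generators
    have huv : η (2 * (j : ZMod (2 * N)) + 1) ^ k * η (2 * (j : ZMod (2 * N)) + 2) ^ k
        = q • (η (2 * (j : ZMod (2 * N)) + 2) ^ k * η (2 * (j : ZMod (2 * N)) + 1) ^ k) := by
      have h := hswapη (2 * (j : ZMod (2 * N)) + 1)
      rw [show (2 * (j : ZMod (2 * N)) + 1) + 1 = 2 * (j : ZMod (2 * N)) + 2 by ring] at h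
      exact h
    have hvw : η (2 * (j : ZMod (2 * N)) + 2) ^ k * η (2 * ((j' : ℕ) : ZMod (2 * N)) + 1) ^ k
        = q • (η (2 * ((j' : ℕ) : ZMod (2 * N)) + 1) ^ k
            * η (2 * (j : ZMod (2 * N)) + 2) ^ k) := by
      have h := hswapη (2 * (j : ZMod (2 * N)) + 2)
      rw [show (2 * (j : ZMod (2 * N)) + 2) + 1 = 2 * ((j' : ℕ) : ZMod (2 * N)) + 1 by
        linear_combination -hcastj'] at h
      exact h
    have huw : η (2 * (j : ZMod (2 * N)) + 1) ^ k * η (2 * ((j' : ℕ) : ZMod (2 * N)) + 1) ^ k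
        = η (2 * ((j' : ℕ) : ZMod (2 * N)) + 1) ^ k * η (2 * (j : ZMod (2 * N)) + 1) ^ k :=
      (hodd _ _ k k).eq
    -- split A₀
    have hj'mem : j' ∈ (Finset.range N).erase j :=
      Finset.mem_erase.mpr ⟨hj'ne, Finset.mem_range.mpr hj'lt⟩
    have hsplit : A₀ = (P j + P j') + ∑ i ∈ ((Finset.range N).erase j).erase j', P i := by
      rw [hA₀', ← Finset.add_sum_erase _ P hjmem, ← Finset.add_sum_erase _ P hj'mem,
        ← add_assoc]
    -- the remainder commutes
    have hTX : Commute (∑ i ∈ ((Finset.range N).erase j).erase j', P i) (R j) := by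
      apply Commute.sum_left
      intro i hi
      have hi' : i ≠ j' ∧ i ≠ j ∧ i < N := by
        simp only [Finset.mem_erase, Finset.mem_range] at hi; tauto
      obtain ⟨hij', hij, hiN⟩ := hi'
      have hbase : ∀ a b : ℕ,
          Commute (η (2 * (i : ZMod (2 * N)) + 1) ^ a) (η (2 * (j : ZMod (2 * N)) + 2) ^ b) := by
        intro a b
        refine hcomm' _ _ ?_ ?_ a b
        · intro h
          exact hij (hinj2 i j hiN hj (by linear_combination -h))
        · intro h
          refine hij' ?_
          have : 2 * ((j' : ℕ) : ZMod (2 * N)) = 2 * ((i : ℕ) : ZMod (2 * N)) := by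
            rw [hcastj']; linear_combination h
          exact (hinj2 j' i hj'lt hiN this).symm
      rw [hPspec i, hRspec j]
      exact ((hbase k k).sub_right (hbase k _)).sub_left
        ((hbase _ k).sub_right (hbase _ _))
    have hTS : Commute (∑ i ∈ ((Finset.range N).erase j).erase j', P i) (P j + P j') := by
      apply Commute.sum_left
      intro i _
      exact (hPP i j).add_right (hPP i j')
    -- conclude via key_step
    rw [hsplit]
    rw [hPsq j, hPsq j', hRsq j] at *
    exact key_step q hq _ _ _ _ (hcube _) (hcube _) (hcube _) huv hvw huw hTX hTS
  -- ### key lemma for the second Dolan–Grady relation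
  have key2 : ∀ j ∈ Finset.range N, ⁅A₁, ⁅A₁, ⁅A₁, P j⁆⁆⁆ = (-27 : ℂ) • ⁅A₁, P j⁆ := by
    intro j hjmem
    have hj : j < N := Finset.mem_range.mp hjmem
    set j' := (j + (N - 1)) % N with hj'def
    have hj'lt : j' < N := Nat.mod_lt _ (by omega)
    have hj'ne : j' ≠ j := by
      rcases Nat.eq_zero_or_pos j with h0 | h0
      · subst h0
        rw [hj'def, Nat.zero_add, Nat.mod_eq_of_lt (by omega)]
        omega
      · have he : j + (N - 1) = N + (j - 1) := by omega
        rw [hj'def, he, Nat.add_mod_left, Nat.mod_eq_of_lt (by omega)]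
        omega
    have hcastj' : 2 * ((j' : ℕ) : ZMod (2 * N)) + 2 = 2 * ((j : ℕ) : ZMod (2 * N)) := by
      rw [hj'def, hmodcast (j + (N - 1))]
      have hc : ((j + (N - 1) : ℕ) : ZMod (2 * N))
          = ((j : ℕ) : ZMod (2 * N)) + ((N : ℕ) : ZMod (2 * N)) - 1 := by
        push_cast [Nat.cast_sub (by omega : 1 ≤ N)]; ring
      rw [hc]
      linear_combination hNN
    -- local generators: u = η(2j'+2)^k (= η(2j)^k), v = η(2j+1)^k, w = η(2j+2)^k
    have huv : η (2 * ((j' : ℕ) : ZMod (2 * N)) + 2) ^ k * η (2 * (j : ZMod (2 * N)) + 1) ^ k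
        = q • (η (2 * (j : ZMod (2 * N)) + 1) ^ k
            * η (2 * ((j' : ℕ) : ZMod (2 * N)) + 2) ^ k) := by
      have h := hswapη (2 * ((j' : ℕ) : ZMod (2 * N)) + 2)
      rw [show (2 * ((j' : ℕ) : ZMod (2 * N)) + 2) + 1 = 2 * (j : ZMod (2 * N)) + 1 by
        linear_combination hcastj'] at h
      exact h
    have hvw : η (2 * (j : ZMod (2 * N)) + 1) ^ k * η (2 * (j : ZMod (2 * N)) + 2) ^ k
        = q • (η (2 * (j : ZMod (2 * N)) + 2) ^ k * η (2 * (j : ZMod (2 * N)) + 1) ^ k) := by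
      have h := hswapη (2 * (j : ZMod (2 * N)) + 1)
      rw [show (2 * (j : ZMod (2 * N)) + 1) + 1 = 2 * (j : ZMod (2 * N)) + 2 by ring] at h
      exact h
    have huw : η (2 * ((j' : ℕ) : ZMod (2 * N)) + 2) ^ k * η (2 * (j : ZMod (2 * N)) + 2) ^ k
        = η (2 * (j : ZMod (2 * N)) + 2) ^ k * η (2 * ((j' : ℕ) : ZMod (2 * N)) + 2) ^ k :=
      (heven _ _ k k).eq
    -- split A₁
    have hj'mem : j' ∈ (Finset.range N).erase j :=
      Finset.mem_erase.mpr ⟨hj'ne, Finset.mem_range.mpr hj'lt⟩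
    have hsplit : A₁ = (R j' + R j) + ∑ i ∈ ((Finset.range N).erase j).erase j', R i := by
      rw [hA₁', ← Finset.add_sum_erase _ R hjmem, ← Finset.add_sum_erase _ R hj'mem,
        ← add_assoc, add_comm (R j) (R j')]
    -- the remainder commutes
    have hTX : Commute (∑ i ∈ ((Finset.range N).erase j).erase j', R i) (P j) := by
      apply Commute.sum_left
      intro i hi
      have hi' : i ≠ j' ∧ i ≠ j ∧ i < N := by
        simp only [Finset.mem_erase, Finset.mem_range] at hi; tauto
      obtain ⟨hij', hij, hiN⟩ := hi'
      have hbase : ∀ a b : ℕ,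
          Commute (η (2 * (i : ZMod (2 * N)) + 2) ^ a) (η (2 * (j : ZMod (2 * N)) + 1) ^ b) := by
        intro a b
        refine hcomm' _ _ ?_ ?_ a b
        · intro h
          refine hij' ?_
          have : 2 * ((i : ℕ) : ZMod (2 * N)) = 2 * ((j' : ℕ) : ZMod (2 * N)) := by
            linear_combination -h - hcastj'
          exact hinj2 i j' hiN hj'lt this
        · intro h
          exact hij (hinj2 i j hiN hj (by linear_combination -h))
      rw [hRspec i, hPspec j]
      exact ((hbase k k).sub_right (hbase k _)).sub_left
        ((hbase _ k).sub_right (hbase _ _))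
    have hTS : Commute (∑ i ∈ ((Finset.range N).erase j).erase j', R i) (R j' + R j) := by
      apply Commute.sum_left
      intro i _
      exact (hRR i j').add_right (hRR i j)
    -- conclude via key_step
    rw [hsplit]
    rw [hRsq j', hRsq j, hPsq j] at *
    exact key_step q hq _ _ _ _ (hcube _) (hcube _) (hcube _) huv hvw huw hTX hTS
  -- ### assemble
  constructor
  · calc ⁅A₀, ⁅A₀, ⁅A₀, A₁⁆⁆⁆
        = ∑ j ∈ Finset.range N, ⁅A₀, ⁅A₀, ⁅A₀, R j⁆⁆⁆ := by
          rw [hA₁']; simp only [lie_sum']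
    _ = ∑ j ∈ Finset.range N, (-27 : ℂ) • ⁅A₀, R j⁆ := Finset.sum_congr rfl key1
    _ = (-27 : ℂ) • ⁅A₀, A₁⁆ := by rw [← Finset.smul_sum, hA₁', lie_sum']
  · calc ⁅A₁, ⁅A₁, ⁅A₁, A₀⁆⁆⁆
        = ∑ j ∈ Finset.range N, ⁅A₁, ⁅A₁, ⁅A₁, P j⁆⁆⁆ := by
          rw [hA₀']; simp only [lie_sum']
    _ = ∑ j ∈ Finset.range N, (-27 : ℂ) • ⁅A₁, P j⁆ := Finset.sum_congr rfl key2
    _ = (-27 : ℂ) • ⁅A₁, A₀⁆ := by rw [← Finset.smul_sum, hA₀', lie_sum']
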